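/- arXiv:1205.3937 — 5 statements merged into one kernel-verified Lean document; each statement's English description precedes it below -/
import Mathlib

section
/- For finite sets A, B of nonzero elements of F_p and any ε > 0, there exists a subset G of A × B with |G| ≥ (1−ε)|A||B| such that the partial difference set {a − b : (a,b) ∈ G} has cardinality at most C(ε) · |A(B+1)| · |B(A+1)| · |A/B| / (|A||B|), where A(B+1) = {a(b+1) : a ∈ A, b ∈ B}, B(A+1) = {b(a+1) : b ∈ B, a ∈ A}, and A/B = {a/b : a ∈ A, b ∈ B}. -/
open Finset Pointwise

set_option maxHeartbeats 2000000 in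
theorem stmt0 (ε : ℝ) (hε : 0 < ε) :
    ∃ C : ℝ, 0 < C ∧ ∀ (p : ℕ) [Fact p.Prime] (A B : Finset (ZMod p)),
      (0 : ZMod p) ∉ A → (0 : ZMod p) ∉ B →
      ∃ G ⊆ A ×ˢ B,
        (1 - ε) * A.card * B.card ≤ (G.card : ℝ) ∧
        ((G.image (fun x => x.1 - x.2)).card : ℝ) ≤
          C * (Finset.image₂ (fun a b => a * (b + 1)) A B).card *
            (Finset.image₂ (fun b a => b * (a + 1)) B A).card *
            (A / B).card / (A.card * B.card) := by
  classical
  refine ⟨2 / ε, by positivity, ?_⟩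
  intro p _ A B hA0 hB0
  rcases eq_or_ne (A.card * B.card) 0 with hN0 | hN0
  · -- degenerate case: A or B is empty
    refine ⟨∅, by simp, ?_, ?_⟩
    · rcases Nat.mul_eq_zero.mp hN0 with h | h <;> simp [h]
    · simp only [Finset.image_empty, Finset.card_empty, Nat.cast_zero]
      apply div_nonneg _ (by positivity)
      have : (0:ℝ) ≤ 2 / ε := by positivity
      positivity
  · -- main case: both nonempty
    have hA : A.Nonempty := Finset.card_pos.mp (Nat.pos_of_ne_zero fun h => hN0 (by simp [h]))
    have hB : B.Nonempty := Finset.card_pos.mp (Nat.pos_of_ne_zero fun h => hN0 (by simp [h]))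
    set X := Finset.image₂ (fun a b => a * (b + 1)) A B with hX
    set Y := Finset.image₂ (fun b a => b * (a + 1)) B A with hY
    set Q := A / B with hQ
    have hQne : Q.Nonempty := by
      obtain ⟨a, ha⟩ := hA; obtain ⟨b, hb⟩ := hB
      exact ⟨a / b, Finset.mem_div.mpr ⟨a, ha, b, hb, rfl⟩⟩
    have hQpos : (0:ℝ) < Q.card := by exact_mod_cast Finset.card_pos.mpr hQne
    have hNpos : (0:ℝ) < (A.card : ℝ) * B.card := by
      have := Nat.pos_of_ne_zero hN0
      exact_mod_cast this
    -- the threshold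
    set θ : ℝ := ε * ((A.card : ℝ) * B.card) / (2 * Q.card) with hθ
    have hθpos : 0 < θ := by
      apply div_pos (mul_pos hε hNpos)
      positivity
    -- fiber counting function
    set f : ZMod p → ℕ := fun w => (B.filter (fun β => w * β ∈ A)).card with hf
    -- the graph G : pairs in heavy fibers
    set G := (A ×ˢ B).filter (fun q => θ ≤ (f (q.1 / q.2) : ℝ)) with hG
    refine ⟨G, Finset.filter_subset _ _, ?_, ?_⟩
    · -- |G| ≥ (1-ε) |A||B|
      set bad := (A ×ˢ B).filter (fun q => ¬ (θ ≤ (f (q.1 / q.2) : ℝ))) with hbad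
      have hsplit : G.card + bad.card = A.card * B.card := by
        rw [hG, hbad, Finset.card_filter_add_card_filter_not, Finset.card_product]
      -- bad ⊆ union of light fibers
      set QL := Q.filter (fun w => ¬ (θ ≤ (f w : ℝ))) with hQL
      have hsub : bad ⊆ QL.biUnion (fun w => (A ×ˢ B).filter (fun q => q.1 / q.2 = w)) := by
        intro q hq
        rw [hbad, Finset.mem_filter] at hq
        obtain ⟨hqAB, hlight⟩ := hq
        rw [Finset.mem_product] at hqAB
        refine Finset.mem_biUnion.mpr ⟨q.1 / q.2, ?_, ?_⟩
        · exact Finset.mem_filter.mpr ⟨Finset.mem_div.mpr ⟨q.1, hqAB.1, q.2, hqAB.2, rfl⟩, hlight⟩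
        · exact Finset.mem_filter.mpr ⟨Finset.mem_product.mpr hqAB, rfl⟩
      have hfiber : ∀ w ∈ QL, ((A ×ˢ B).filter (fun q => q.1 / q.2 = w)).card ≤ f w := by
        intro w _
        apply Finset.card_le_card_of_injOn (fun q => q.2)
        · intro q hq
          rw [Finset.mem_coe, Finset.mem_filter] at hq
          obtain ⟨hqAB, hqw⟩ := hq
          rw [Finset.mem_product] at hqAB
          have hq2 : q.2 ≠ 0 := fun h => hB0 (h ▸ hqAB.2)
          refine Finset.mem_filter.mpr ⟨hqAB.2, ?_⟩
          rw [← hqw, div_mul_cancel₀ _ hq2]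
          exact hqAB.1
        · intro u hu v hv huv
          simp only [Finset.coe_filter, Set.mem_setOf_eq] at hu hv
          obtain ⟨huAB, huw⟩ := hu
          obtain ⟨hvAB, hvw⟩ := hv
          rw [Finset.mem_product] at huAB hvAB
          have hu2 : u.2 ≠ 0 := fun h => hB0 (h ▸ huAB.2)
          have hv2 : v.2 ≠ 0 := fun h => hB0 (h ▸ hvAB.2)
          have hu1 : u.1 = w * u.2 := by rw [← huw, div_mul_cancel₀ _ hu2]
          have hv1 : v.1 = w * v.2 := by rw [← hvw, div_mul_cancel₀ _ hv2]
          have huv2 : u.2 = v.2 := huv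
          exact Prod.ext (by rw [hu1, hv1, huv2]) huv2
      have hbadcard : (bad.card : ℝ) ≤ Q.card * θ := by
        have h1 : bad.card ≤ ∑ w ∈ QL, f w := by
          calc bad.card ≤ (QL.biUnion (fun w => (A ×ˢ B).filter (fun q => q.1 / q.2 = w))).card :=
                Finset.card_le_card hsub
            _ ≤ ∑ w ∈ QL, ((A ×ˢ B).filter (fun q => q.1 / q.2 = w)).card :=
                Finset.card_biUnion_le
            _ ≤ ∑ w ∈ QL, f w := Finset.sum_le_sum hfiber
        have h2 : ((∑ w ∈ QL, f w : ℕ) : ℝ) ≤ QL.card * θ := by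
          rw [Nat.cast_sum]
          calc ∑ w ∈ QL, (f w : ℝ) ≤ ∑ w ∈ QL, θ := by
                apply Finset.sum_le_sum
                intro w hw
                rw [hQL, Finset.mem_filter] at hw
                exact (not_le.mp hw.2).le
            _ = QL.card * θ := by rw [Finset.sum_const, nsmul_eq_mul]
        calc (bad.card : ℝ) ≤ ((∑ w ∈ QL, f w : ℕ) : ℝ) := by exact_mod_cast h1
          _ ≤ QL.card * θ := h2
          _ ≤ Q.card * θ := by
              apply mul_le_mul_of_nonneg_right _ hθpos.le
              exact_mod_cast Finset.card_le_card (Finset.filter_subset _ _)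
      have hQθ : (Q.card : ℝ) * θ = ε * ((A.card : ℝ) * B.card) / 2 := by
        rw [hθ]
        field_simp
      have hGcard : (G.card : ℝ) + bad.card = (A.card : ℝ) * B.card := by
        exact_mod_cast congrArg (Nat.cast : ℕ → ℝ) hsplit
      have hεN : 0 ≤ ε * ((A.card : ℝ) * B.card) := by positivity
      rw [hQθ] at hbadcard
      nlinarith [hbadcard, hGcard, hεN]
    · -- difference set bound
      set T := G.image (fun x => x.1 - x.2) with hT
      set S : ZMod p → Finset (ZMod p) := fun d => X.filter (fun x => x - d ∈ Y) with hS
      -- every kept difference has many X/Y representations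
      have hstepA : ∀ d ∈ T, θ ≤ ((S d).card : ℝ) := by
        intro d hd
        rw [hT, Finset.mem_image] at hd
        obtain ⟨q, hqG, hqd⟩ := hd
        rw [hG, Finset.mem_filter] at hqG
        obtain ⟨hqAB, hheavy⟩ := hqG
        rw [Finset.mem_product] at hqAB
        obtain ⟨hq1, hq2⟩ := hqAB
        have hb : q.2 ≠ 0 := fun h => hB0 (h ▸ hq2)
        have ha : q.1 ≠ 0 := fun h => hA0 (h ▸ hq1)
        have hcard : f (q.1 / q.2) ≤ (S d).card := by
          apply Finset.card_le_card_of_injOn (fun β => q.1 * (β + 1))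
          · intro β hβ
            rw [Finset.mem_coe, Finset.mem_filter] at hβ
            obtain ⟨hβB, hβA⟩ := hβ
            refine Finset.mem_filter.mpr ⟨Finset.mem_image₂_of_mem hq1 hβB, ?_⟩
            have key : q.1 * (β + 1) - d = q.2 * ((q.1 / q.2) * β + 1) := by
              rw [← hqd]
              field_simp
              ring
            rw [key]
            exact Finset.mem_image₂_of_mem hq2 hβA
          · intro u hu v hv huv
            simp only at huv
            have := mul_left_cancel₀ ha huv
            exact add_right_cancel this
        calc θ ≤ (f (q.1 / q.2) : ℝ) := hheavy
          _ ≤ ((S d).card : ℝ) := by exact_mod_cast hcard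
      -- double counting: sum of |S d| over d ∈ T is at most |X||Y|
      have hstepB : ∑ d ∈ T, (S d).card ≤ X.card * Y.card := by
        calc ∑ d ∈ T, (S d).card = (T.sigma S).card := (Finset.card_sigma _ _).symm
          _ ≤ (X ×ˢ Y).card := by
              apply Finset.card_le_card_of_injOn (fun q => (q.2, q.2 - q.1))
              · intro q hq
                rw [Finset.mem_coe, Finset.mem_sigma] at hq
                have := hq.2
                rw [hS, Finset.mem_filter] at this
                exact Finset.mem_product.mpr ⟨this.1, this.2⟩
              · rintro ⟨d, x⟩ hu ⟨d', x'⟩ hv huv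
                simp only [Prod.mk.injEq] at huv
                obtain ⟨h1, h2⟩ := huv
                subst h1
                have hdd : d = d' := sub_right_inj.mp h2
                subst hdd
                rfl
          _ = X.card * Y.card := Finset.card_product _ _
      have hmain : (T.card : ℝ) * θ ≤ (X.card : ℝ) * Y.card := by
        calc (T.card : ℝ) * θ = ∑ _d ∈ T, θ := by rw [Finset.sum_const, nsmul_eq_mul]
          _ ≤ ∑ d ∈ T, ((S d).card : ℝ) := Finset.sum_le_sum hstepA
          _ = ((∑ d ∈ T, (S d).card : ℕ) : ℝ) := by rw [Nat.cast_sum]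
          _ ≤ ((X.card * Y.card : ℕ) : ℝ) := by exact_mod_cast hstepB
          _ = (X.card : ℝ) * Y.card := by push_cast; ring
      have hfinal : (T.card : ℝ) ≤ (X.card : ℝ) * Y.card / θ := by
        rw [le_div_iff₀ hθpos]
        exact hmain
      have hεne : ε ≠ 0 := ne_of_gt hε
      have hNne : (A.card : ℝ) * B.card ≠ 0 := ne_of_gt hNpos
      have hQcne : (Q.card : ℝ) ≠ 0 := ne_of_gt hQpos
      have heq : (X.card : ℝ) * Y.card / θ =
          2 / ε * X.card * Y.card * Q.card / ((A.card : ℝ) * B.card) := by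
        rw [hθ]
        field_simp
      calc (T.card : ℝ) ≤ (X.card : ℝ) * Y.card / θ := hfinal
        _ = 2 / ε * X.card * Y.card * Q.card / ((A.card : ℝ) * B.card) := heq
end

section
/- Let 0 < ε < 1/16 and let A be a finite set in an abelian group with G ⊆ A × A satisfying |G| ≥ (1−ε)|A|². Then there exists A' ⊆ A with |A'| ≥ c(ε)|A| such that |A' − A'| ≤ C(ε) · |A −_G A|² / |A|. -/
open Finset Pointwise

theorem stmt5 (ε : ℝ) (hε0 : 0 < ε) (hε1 : ε < 1/16) :
    ∃ c C : ℝ, 0 < c ∧ 0 < C ∧ ∀ {α : Type} [AddCommGroup α] [DecidableEq α]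
      (A : Finset α) (G : Finset (α × α)), G ⊆ A ×ˢ A →
      (1 - ε) * (A.card : ℝ) ^ 2 ≤ (G.card : ℝ) →
      ∃ A' ⊆ A, c * A.card ≤ (A'.card : ℝ) ∧
        ((A' - A').card : ℝ) ≤
          C * ((G.image (fun x => x.1 - x.2)).card : ℝ) ^ 2 / A.card := by
  classical
  refine ⟨3/4, 2, by norm_num, by norm_num, ?_⟩
  intro α _ _ A G hG hcard
  rcases A.eq_empty_or_nonempty with rfl | hA
  · refine ⟨∅, Finset.empty_subset _, by simp, by simp⟩
  have hn : (0:ℝ) < A.card := by exact_mod_cast Finset.card_pos.2 hA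
  set n : ℝ := (A.card : ℝ) with hn_def
  -- neighborhoods
  set N : α → Finset α := fun a => A.filter (fun x => (a, x) ∈ G) with hN
  have hNsub : ∀ a, N a ⊆ A := fun a => Finset.filter_subset _ _
  have hNle : ∀ a, ((N a).card : ℝ) ≤ n := by
    intro a; exact_mod_cast Nat.cast_le.2 (Finset.card_le_card (hNsub a))
  set A' := A.filter (fun a => (1 - 4*ε) * n ≤ ((N a).card : ℝ)) with hA'
  have hA'sub : A' ⊆ A := Finset.filter_subset _ _
  -- |G| = sum of degrees
  have hGsum : G.card = ∑ a ∈ A, (G.filter (fun p => p.1 = a)).card :=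
    Finset.card_eq_sum_card_fiberwise (fun p hp => (Finset.mem_product.1 (hG hp)).1)
  have hfiber : ∀ a ∈ A, (G.filter (fun p => p.1 = a)).card = (N a).card := by
    intro a _
    apply Finset.card_bij (fun p _ => p.2)
    · intro p hp
      obtain ⟨hpG, hp1⟩ := Finset.mem_filter.1 hp
      have := (Finset.mem_product.1 (hG hpG)).2
      simp only [hN, Finset.mem_filter]
      refine ⟨this, ?_⟩
      have : (a, p.2) = p := by rw [← hp1]
      rw [this]; exact hpG
    · intro p hp q hq h
      obtain ⟨_, hp1⟩ := Finset.mem_filter.1 hp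
      obtain ⟨_, hq1⟩ := Finset.mem_filter.1 hq
      exact Prod.ext (hp1.trans hq1.symm) h
    · intro x hx
      obtain ⟨_, hxG⟩ := Finset.mem_filter.1 hx
      exact ⟨(a, x), Finset.mem_filter.2 ⟨hxG, rfl⟩, rfl⟩
  have hGsum' : (G.card : ℝ) = ∑ a ∈ A, ((N a).card : ℝ) := by
    rw [hGsum]
    push_cast
    exact Finset.sum_congr rfl (fun a ha => by rw [hfiber a ha])
  -- split the sum
  have hsplit : ∑ a ∈ A, ((N a).card : ℝ)
      ≤ (A'.card : ℝ) * n + (1 - 4*ε) * n * ((A.card : ℝ) - A'.card) := by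
    have h1 : ∑ a ∈ A', ((N a).card : ℝ) ≤ (A'.card : ℝ) * n := by
      calc ∑ a ∈ A', ((N a).card : ℝ) ≤ ∑ _a ∈ A', n :=
            Finset.sum_le_sum (fun a _ => hNle a)
        _ = (A'.card : ℝ) * n := by rw [Finset.sum_const, nsmul_eq_mul]
    have h2 : ∑ a ∈ A.filter (fun a => ¬ ((1 - 4*ε) * n ≤ ((N a).card : ℝ))),
        ((N a).card : ℝ) ≤ (1 - 4*ε) * n * ((A.card : ℝ) - A'.card) := by
      have hcc : (A.filter (fun a => ¬ ((1 - 4*ε) * n ≤ ((N a).card : ℝ)))).card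
          = A.card - A'.card := by
        have h2 : A'.card + (A.filter (fun a => ¬ ((1 - 4*ε) * n ≤ ((N a).card : ℝ)))).card
            = A.card := Finset.card_filter_add_card_filter_not _
        omega
      calc ∑ a ∈ A.filter (fun a => ¬ ((1 - 4*ε) * n ≤ ((N a).card : ℝ))), ((N a).card : ℝ)
          ≤ ∑ _a ∈ A.filter (fun a => ¬ ((1 - 4*ε) * n ≤ ((N a).card : ℝ))), (1 - 4*ε) * n := by
            apply Finset.sum_le_sum
            intro a ha
            exact le_of_lt (not_le.1 (Finset.mem_filter.1 ha).2)
        _ = ((A.filter (fun a => ¬ ((1 - 4*ε) * n ≤ ((N a).card : ℝ)))).card : ℝ) * ((1 - 4*ε) * n) := by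
            rw [Finset.sum_const, nsmul_eq_mul]
        _ ≤ (1 - 4*ε) * n * ((A.card : ℝ) - A'.card) := by
            rw [hcc]
            have hle : A'.card ≤ A.card := Finset.card_le_card hA'sub
            rw [Nat.cast_sub hle]
            ring_nf
            exact le_refl _
    calc ∑ a ∈ A, ((N a).card : ℝ)
        = ∑ a ∈ A', ((N a).card : ℝ)
          + ∑ a ∈ A.filter (fun a => ¬ ((1 - 4*ε) * n ≤ ((N a).card : ℝ))), ((N a).card : ℝ) :=
          (Finset.sum_filter_add_sum_filter_not A _ _).symm
      _ ≤ _ := add_le_add h1 h2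
  -- lower bound on |A'|
  have hA'card : 3/4 * n ≤ (A'.card : ℝ) := by
    have hAA' : (A'.card : ℝ) ≤ n := by
      rw [hn_def]; exact_mod_cast Finset.card_le_card hA'sub
    rw [← hn_def] at hsplit
    have hchain : (1 - ε) * n ^ 2 ≤ (A'.card : ℝ) * n + (1 - 4*ε) * n * (n - A'.card) :=
      hcard.trans ((le_of_eq hGsum').trans hsplit)
    nlinarith [hchain, hn, hε0, mul_pos hn hε0]
  set D := G.image (fun x : α × α => x.1 - x.2) with hD
  -- key fiber bound
  have key : ∀ v ∈ A' - A',
      (1 - 8*ε) * n ≤ (((D ×ˢ D).filter (fun p : α × α => p.1 - p.2 = v)).card : ℝ) := by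
    intro v hv
    obtain ⟨a, ha, b, hb, hab⟩ := Finset.mem_sub.1 hv
    have hda : (1 - 4*ε) * n ≤ ((N a).card : ℝ) := (Finset.mem_filter.1 ha).2
    have hdb : (1 - 4*ε) * n ≤ ((N b).card : ℝ) := (Finset.mem_filter.1 hb).2
    have hinter : (1 - 8*ε) * n ≤ ((N a ∩ N b).card : ℝ) := by
      have hu : ((N a ∪ N b).card : ℝ) ≤ n := by
        exact_mod_cast Nat.cast_le.2 (Finset.card_le_card (Finset.union_subset (hNsub a) (hNsub b)))
      have he : ((N a ∪ N b).card : ℝ) + ((N a ∩ N b).card : ℝ)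
          = ((N a).card : ℝ) + ((N b).card : ℝ) := by
        exact_mod_cast congrArg Nat.cast (Finset.card_union_add_card_inter (N a) (N b))
      nlinarith
    have hinj : (N a ∩ N b).card
        ≤ ((D ×ˢ D).filter (fun p : α × α => p.1 - p.2 = v)).card := by
      apply Finset.card_le_card_of_injOn (fun x => (a - x, b - x))
      · intro x hx
        obtain ⟨hxa, hxb⟩ := Finset.mem_inter.1 hx
        have hxa' : (a, x) ∈ G := (Finset.mem_filter.1 hxa).2
        have hxb' : (b, x) ∈ G := (Finset.mem_filter.1 hxb).2
        refine Finset.mem_filter.2 ⟨Finset.mem_product.2 ⟨?_, ?_⟩, ?_⟩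
        · exact Finset.mem_image.2 ⟨(a, x), hxa', rfl⟩
        · exact Finset.mem_image.2 ⟨(b, x), hxb', rfl⟩
        · simp only
          rw [← hab]; abel
      · intro x _ y _ h
        have h1 : a - x = a - y := congrArg Prod.fst h
        exact sub_right_injective h1
    calc (1 - 8*ε) * n ≤ ((N a ∩ N b).card : ℝ) := hinter
      _ ≤ _ := by exact_mod_cast hinj
  -- sum of fibers bounded by |D|^2
  have hsum2 : ∑ v ∈ A' - A',
      (((D ×ˢ D).filter (fun p : α × α => p.1 - p.2 = v)).card : ℝ) ≤ (D.card : ℝ)^2 := by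
    set s := (D ×ˢ D).filter (fun p : α × α => p.1 - p.2 ∈ A' - A') with hs
    have hscard : s.card = ∑ v ∈ A' - A', (s.filter (fun p : α × α => p.1 - p.2 = v)).card :=
      Finset.card_eq_sum_card_fiberwise (fun p hp => (Finset.mem_filter.1 hp).2)
    have heq : ∀ v ∈ A' - A',
        (D ×ˢ D).filter (fun p : α × α => p.1 - p.2 = v)
        = s.filter (fun p : α × α => p.1 - p.2 = v) := by
      intro v hv
      ext p
      simp only [hs, Finset.mem_filter]
      constructor
      · rintro ⟨hp, hp2⟩; exact ⟨⟨hp, hp2 ▸ hv⟩, hp2⟩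
      · rintro ⟨⟨hp, _⟩, hp2⟩; exact ⟨hp, hp2⟩
    calc ∑ v ∈ A' - A', (((D ×ˢ D).filter (fun p : α × α => p.1 - p.2 = v)).card : ℝ)
        = ((∑ v ∈ A' - A', (s.filter (fun p : α × α => p.1 - p.2 = v)).card : ℕ) : ℝ) := by
          push_cast
          exact Finset.sum_congr rfl (fun v hv => by rw [heq v hv])
      _ = (s.card : ℝ) := by rw [← hscard]
      _ ≤ ((D ×ˢ D).card : ℝ) := by
          exact_mod_cast Nat.cast_le.2 (Finset.card_le_card (Finset.filter_subset _ _))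
      _ = (D.card : ℝ)^2 := by rw [Finset.card_product]; push_cast; ring
  have hmain : ((A' - A').card : ℝ) * ((1 - 8*ε) * n) ≤ (D.card : ℝ)^2 := by
    calc ((A' - A').card : ℝ) * ((1 - 8*ε) * n)
        = ∑ _v ∈ A' - A', (1 - 8*ε) * n := by rw [Finset.sum_const, nsmul_eq_mul]
      _ ≤ ∑ v ∈ A' - A',
          (((D ×ˢ D).filter (fun p : α × α => p.1 - p.2 = v)).card : ℝ) :=
          Finset.sum_le_sum key
      _ ≤ (D.card : ℝ)^2 := hsum2
  refine ⟨A', hA'sub, hA'card, ?_⟩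
  have hx0 : (0:ℝ) ≤ ((A' - A').card : ℝ) := Nat.cast_nonneg _
  have hfinal : ((A' - A').card : ℝ) * n ≤ 2 * (D.card : ℝ)^2 := by
    nlinarith [hmain, mul_nonneg hx0 hn.le, hε1]
  rw [le_div_iff₀ hn]
  linarith
end

section
/- For any finite set A ⊆ F_p with 0, −1 ∉ A, the ratio set satisfies |A/A| ≤ |A(A+1)|² / |A|, where A(A+1) = {a(b+1) : a, b ∈ A}. -/
open Finset Pointwise

theorem stmt6 (p : ℕ) [Fact p.Prime] (A : Finset (ZMod p))
    (h0 : (0 : ZMod p) ∉ A) (h1 : (-1 : ZMod p) ∉ A) :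
    ((A / A).card : ℝ) ≤
      ((Finset.image₂ (fun a b => a * (b + 1)) A A).card : ℝ) ^ 2 / A.card := by
  classical
  set B := Finset.image₂ (fun a b => a * (b + 1)) A A with hB
  rcases A.eq_empty_or_nonempty with hA | hA
  · simp [hA]
  have hApos : 0 < (A.card : ℝ) := by exact_mod_cast Finset.card_pos.mpr hA
  rw [le_div_iff₀ hApos]
  have key : (A / A).card * A.card ≤ B.card * B.card := by
    have hprod : ((A / A) ×ˢ A).card ≤ (B ×ˢ B).card := by
      set r : ZMod p → ZMod p × ZMod p := fun x =>
        if h : ∃ a ∈ A, ∃ b ∈ A, a / b = x then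
          (h.choose, h.choose_spec.2.choose) else (0, 0) with hr
      have hrspec : ∀ x ∈ A / A, (r x).1 ∈ A ∧ (r x).2 ∈ A ∧ (r x).1 / (r x).2 = x := by
        intro x hx
        rw [Finset.mem_div] at hx
        obtain ⟨a, ha, b, hb, hab⟩ := hx
        have h : ∃ a ∈ A, ∃ b ∈ A, a / b = x := ⟨a, ha, b, hb, hab⟩
        simp only [hr, dif_pos h]
        exact ⟨h.choose_spec.1, h.choose_spec.2.choose_spec.1,
          h.choose_spec.2.choose_spec.2⟩
      apply Finset.card_le_card_of_injOn
        (fun q => ((r q.1).1 * (q.2 + 1), (r q.1).2 * (q.2 + 1)))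
      · rintro ⟨x, a⟩ hq
        rw [Finset.mem_coe, Finset.mem_product] at hq
        obtain ⟨hx, ha⟩ := hq
        obtain ⟨h1', h2', _⟩ := hrspec x hx
        exact Finset.mem_coe.2 (Finset.mem_product.2 ⟨Finset.mem_image₂_of_mem h1' ha,
          Finset.mem_image₂_of_mem h2' ha⟩)
      · rintro ⟨x, a⟩ hq ⟨y, c⟩ hq' heq
        rw [Finset.mem_coe, Finset.mem_product] at hq hq'
        obtain ⟨hx, ha⟩ := hq
        obtain ⟨hy, hc⟩ := hq'
        obtain ⟨hx1, hx2, hx3⟩ := hrspec x hx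
        obtain ⟨hy1, hy2, hy3⟩ := hrspec y hy
        simp only [Prod.mk.injEq] at heq
        obtain ⟨e1, e2⟩ := heq
        have ha1 : a + 1 ≠ 0 := fun h => h1 (by rwa [eq_neg_of_add_eq_zero_left h] at ha)
        have hc1 : c + 1 ≠ 0 := fun h => h1 (by rwa [eq_neg_of_add_eq_zero_left h] at hc)
        have hx1n : (r x).1 ≠ 0 := fun h => h0 (h ▸ hx1)
        have hx2n : (r x).2 ≠ 0 := fun h => h0 (h ▸ hx2)
        have hy2n : (r y).2 ≠ 0 := fun h => h0 (h ▸ hy2)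
        have hcross : (r x).1 * (r y).2 = (r y).1 * (r x).2 := by
          have h' : ((r x).1 * (r y).2) * ((a + 1) * (c + 1)) =
              ((r y).1 * (r x).2) * ((a + 1) * (c + 1)) := by
            linear_combination ((r y).2 * (c + 1)) * e1 - ((r y).1 * (c + 1)) * e2
          exact mul_right_cancel₀ (mul_ne_zero ha1 hc1) h'
        have hxy : x = y := by
          rw [← hx3, ← hy3, div_eq_div_iff hx2n hy2n]
          exact hcross
        subst hxy
        have hac : a = c := by
          have h' := mul_left_cancel₀ hx1n e1
          exact add_right_cancel h'
        simp [hac]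
    rw [Finset.card_product, Finset.card_product] at hprod
    exact hprod
  have : ((A / A).card : ℝ) * A.card ≤ (B.card : ℝ) * B.card := by exact_mod_cast key
  nlinarith [this]
end

section
/- Let A ⊆ F_p be a finite set with |A| < p^{1/2}, and suppose the ratio set R(A) = {(α−β)/(γ−δ) : α,β,γ,δ ∈ A, γ ≠ δ} equals all of F_p. Then there exists ξ ∈ R(A) such that the additive energy E_+(A, ξA) — the number of solutions of a + ξb = c + ξd with a,b,c,d ∈ A — is at most C|A|² for an absolute constant C. -/
open Finset

/-- The ratio set of differences `R(A) = {(α−β)/(γ−δ) : α,β,γ,δ ∈ A, γ ≠ δ}`. -/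
def ratioSet {p : ℕ} [Fact p.Prime] (A : Finset (ZMod p)) : Finset (ZMod p) :=
  (((A ×ˢ A) ×ˢ (A ×ˢ A)).filter (fun q => q.2.1 ≠ q.2.2)).image
    (fun q => (q.1.1 - q.1.2) / (q.2.1 - q.2.2))

theorem stmt17 :
    ∃ C : ℝ, 0 < C ∧ ∀ (p : ℕ) [Fact p.Prime] (A : Finset (ZMod p)),
      (A.card : ℝ) < Real.sqrt p →
      ratioSet A = Finset.univ →
      ∃ ξ ∈ ratioSet A,
        (((((A ×ˢ A) ×ˢ (A ×ˢ A)).filter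
            (fun q => q.1.1 + ξ * q.1.2 = q.2.1 + ξ * q.2.2)).card : ℝ) ≤
          C * (A.card : ℝ) ^ 2) := by
  refine ⟨2, by norm_num, ?_⟩
  intro p hp A hA hR
  haveI : NeZero p := ⟨hp.out.ne_zero⟩
  have hA2 : A.card ^ 2 ≤ p := by
    have h1 : ((A.card : ℝ)) ^ 2 < (Real.sqrt p) ^ 2 := by
      apply sq_lt_sq' _ hA
      have : (0:ℝ) ≤ Real.sqrt p := Real.sqrt_nonneg _
      linarith [Nat.cast_nonneg (α := ℝ) A.card]
    rw [Real.sq_sqrt (by positivity)] at h1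
    exact_mod_cast h1.le
  set Q := (A ×ˢ A) ×ˢ (A ×ˢ A) with hQdef
  set S : ZMod p → ℕ := fun ξ =>
    (Q.filter (fun q => q.1.1 + ξ * q.1.2 = q.2.1 + ξ * q.2.2)).card with hSdef
  have key : ∑ ξ : ZMod p, S ξ ≤ 2 * (p * A.card ^ 2) := by
    have swap : ∑ ξ : ZMod p, S ξ =
        ∑ q ∈ Q, (univ.filter (fun ξ : ZMod p =>
          q.1.1 + ξ * q.1.2 = q.2.1 + ξ * q.2.2)).card := by
      simp only [hSdef, card_filter]
      exact Finset.sum_comm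
    rw [swap]
    have inner : ∀ q ∈ Q, (univ.filter (fun ξ : ZMod p =>
          q.1.1 + ξ * q.1.2 = q.2.1 + ξ * q.2.2)).card ≤
        (if q.1.2 = q.2.2 ∧ q.1.1 = q.2.1 then p else 1) := by
      intro q _
      split_ifs with h
      · exact (Finset.card_filter_le _ _).trans (by simp [ZMod.card])
      · push_neg at h
        rw [Finset.card_le_one]
        intro ξ hξ ξ' hξ'
        simp only [mem_filter, mem_univ, true_and] at hξ hξ'
        have hz : (ξ - ξ') * (q.1.2 - q.2.2) = 0 := by linear_combination hξ - hξ'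
        rcases mul_eq_zero.mp hz with h1 | h1
        · exact sub_eq_zero.mp h1
        · exfalso
          have hbd : q.1.2 = q.2.2 := sub_eq_zero.mp h1
          apply h hbd
          rw [hbd] at hξ
          exact add_right_cancel hξ
    calc ∑ q ∈ Q, (univ.filter (fun ξ : ZMod p =>
            q.1.1 + ξ * q.1.2 = q.2.1 + ξ * q.2.2)).card
        ≤ ∑ q ∈ Q, (if q.1.2 = q.2.2 ∧ q.1.1 = q.2.1 then p else 1) :=
          Finset.sum_le_sum inner
      _ = (Q.filter (fun q => q.1.2 = q.2.2 ∧ q.1.1 = q.2.1)).card * p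
          + (Q.filter (fun q => ¬(q.1.2 = q.2.2 ∧ q.1.1 = q.2.1))).card * 1 := by
          rw [Finset.sum_ite, Finset.sum_const, Finset.sum_const, smul_eq_mul, smul_eq_mul]
      _ ≤ A.card ^ 2 * p + A.card ^ 2 * A.card ^ 2 := by
          have hdiag : (Q.filter (fun q => q.1.2 = q.2.2 ∧ q.1.1 = q.2.1)).card ≤
              A.card ^ 2 := by
            have h := Finset.card_le_card_of_injOn (fun q => q.1)
              (s := Q.filter (fun q => q.1.2 = q.2.2 ∧ q.1.1 = q.2.1)) (t := A ×ˢ A)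
              (fun q hq => by
                simp only [Finset.mem_coe, mem_filter, hQdef, mem_product] at hq
                simp [mem_product, hq.1.1.1, hq.1.1.2])
              (fun q hq q' hq' hqq' => by
                simp only [Finset.mem_coe, mem_filter] at hq hq'
                have h2 : q.2 = q.1 := Prod.ext hq.2.2.symm hq.2.1.symm
                have h2' : q'.2 = q'.1 := Prod.ext hq'.2.2.symm hq'.2.1.symm
                exact Prod.ext hqq' (by rw [h2, h2']; exact hqq'))
            simpa [sq, Finset.card_product] using h
          have hrest : (Q.filter (fun q => ¬(q.1.2 = q.2.2 ∧ q.1.1 = q.2.1))).card ≤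
              A.card ^ 2 * A.card ^ 2 := by
            refine (Finset.card_filter_le _ _).trans (le_of_eq ?_)
            simp [hQdef, Finset.card_product]; ring
          calc (Q.filter (fun q => q.1.2 = q.2.2 ∧ q.1.1 = q.2.1)).card * p
              + (Q.filter (fun q => ¬(q.1.2 = q.2.2 ∧ q.1.1 = q.2.1))).card * 1
              ≤ A.card ^ 2 * p + A.card ^ 2 * A.card ^ 2 * 1 :=
                Nat.add_le_add (Nat.mul_le_mul_right _ hdiag) (Nat.mul_le_mul_right _ hrest)
            _ = A.card ^ 2 * p + A.card ^ 2 * A.card ^ 2 := by ring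
      _ ≤ A.card ^ 2 * p + p * A.card ^ 2 :=
          Nat.add_le_add_left (Nat.mul_le_mul_right _ hA2) _
      _ = 2 * (p * A.card ^ 2) := by ring
  have hcardU : (Finset.univ : Finset (ZMod p)).card = p := by simp [ZMod.card]
  have : ∑ ξ : ZMod p, S ξ ≤ ∑ _ξ : ZMod p, 2 * A.card ^ 2 := by
    rw [Finset.sum_const, hcardU, smul_eq_mul]
    calc ∑ ξ : ZMod p, S ξ ≤ 2 * (p * A.card ^ 2) := key
      _ = p * (2 * A.card ^ 2) := by ring
  obtain ⟨ξ, -, hξ⟩ := Finset.exists_le_of_sum_le Finset.univ_nonempty this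
  refine ⟨ξ, by rw [hR]; exact mem_univ ξ, ?_⟩
  have : (S ξ : ℝ) ≤ 2 * (A.card : ℝ) ^ 2 := by exact_mod_cast hξ
  exact this
end

section
/- Let A ⊆ F_p be finite and suppose R(A) = {(α−β)/(γ−δ) : α,β,γ,δ ∈ A, γ ≠ δ} is not all of F_p. Then there exists ξ ∈ R(A) with ξ − 1 ∉ R(A), and for any such ξ and any subset A* ⊆ A, the map (a, b) ↦ a + (ξ−1)b from A* × A* to F_p is injective; in particular |A* + (ξ−1)A*| = |A*|². -/
open Finset

lemma mem_ratioSet {p : ℕ} [Fact p.Prime] {A : Finset (ZMod p)} {a b c d : ZMod p}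
    (ha : a ∈ A) (hb : b ∈ A) (hc : c ∈ A) (hd : d ∈ A) (hcd : c ≠ d) :
    (a - b) / (c - d) ∈ ratioSet A := by
  simp only [ratioSet, mem_image, mem_filter, mem_product]
  exact ⟨((a, b), (c, d)), ⟨⟨⟨ha, hb⟩, hc, hd⟩, hcd⟩, rfl⟩

theorem stmt19 (p : ℕ) [Fact p.Prime] (A : Finset (ZMod p)) (hA : 2 ≤ A.card)
    (hR : ratioSet A ≠ Finset.univ) :
    (∃ ξ ∈ ratioSet A, ξ - 1 ∉ ratioSet A) ∧
    ∀ ξ ∈ ratioSet A, ξ - 1 ∉ ratioSet A →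
      ∀ Astar ⊆ A,
        Set.InjOn (fun q : ZMod p × ZMod p => q.1 + (ξ - 1) * q.2)
          (Astar ×ˢ Astar : Finset (ZMod p × ZMod p)) ∧
        ((Astar ×ˢ Astar).image (fun q => q.1 + (ξ - 1) * q.2)).card = Astar.card ^ 2 := by
  constructor
  · -- existence
    obtain ⟨a, ha, b, hb, hab⟩ := Finset.one_lt_card.mp hA
    have h1 : (1 : ZMod p) ∈ ratioSet A := by
      have := mem_ratioSet ha hb ha hb (by exact hab)
      rwa [div_self (sub_ne_zero.mpr hab)] at this
    obtain ⟨x, hx⟩ : ∃ x, x ∉ ratioSet A := by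
      by_contra h
      push_neg at h
      exact hR (Finset.eq_univ_of_forall h)
    have hx1 : x ≠ 1 := fun h => hx (h ▸ h1)
    have hQ : ∃ n : ℕ, 1 ≤ n ∧ x + (n : ZMod p) ∈ ratioSet A := by
      refine ⟨(1 - x).val, ?_, ?_⟩
      · have : (1 - x) ≠ 0 := sub_ne_zero.mpr (Ne.symm hx1)
        have := ZMod.val_ne_zero (1 - x) |>.mpr this
        omega
      · rw [ZMod.natCast_val, ZMod.cast_id]
        simpa using h1
    classical
    set n0 := Nat.find hQ with hn0
    obtain ⟨hn0pos, hn0mem⟩ := Nat.find_spec hQ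
    refine ⟨x + (n0 : ZMod p), hn0mem, ?_⟩
    have hcast : x + (n0 : ZMod p) - 1 = x + ((n0 - 1 : ℕ) : ZMod p) := by
      have : ((n0 - 1 : ℕ) : ZMod p) = (n0 : ZMod p) - 1 := by
        push_cast [Nat.cast_sub (show 1 ≤ n0 from hn0pos)]; ring
      rw [this]; ring
    rw [hcast]
    rcases Nat.eq_or_lt_of_le hn0pos with h1' | h1'
    · have : n0 - 1 = 0 := by omega
      simpa [this] using hx
    · have hlt : n0 - 1 < n0 := by omega
      have := Nat.find_min hQ hlt
      rw [not_and] at this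
      exact this (by omega)
  · intro ξ hξ hξ1 Astar hsub
    have hinj : Set.InjOn (fun q : ZMod p × ZMod p => q.1 + (ξ - 1) * q.2)
        (Astar ×ˢ Astar : Finset (ZMod p × ZMod p)) := by
      rintro ⟨a, b⟩ hab ⟨a', b'⟩ hab' heq
      simp only [Finset.coe_product, Set.mem_prod, Finset.mem_coe] at hab hab'
      simp only at heq
      by_cases hbb : b = b'
      · subst hbb
        have : a = a' := by linear_combination heq
        simp [this]
      · exfalso
        apply hξ1
        have hne : b - b' ≠ 0 := sub_ne_zero.mpr hbb
        have : ξ - 1 = (a' - a) / (b - b') := by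
          field_simp
          linear_combination heq
        rw [this]
        exact mem_ratioSet (hsub hab'.1) (hsub hab.1) (hsub hab.2) (hsub hab'.2) hbb
    refine ⟨hinj, ?_⟩
    rw [Finset.card_image_of_injOn hinj, Finset.card_product, sq]
end
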